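/- arXiv:1809.00697 — 2 statements merged into one kernel-verified Lean document; each statement's English description precedes it below -/
import Mathlib

section
/- Let X be a nonempty finite set and let C belong to the class 𝒞. Then the indirect cost φ(C) satisfies Axiom 1 (Blackwell monotonicity): for all π, π' ∈ Δ²(X), if π' = π∘k for some Borel kernel k that is mean-preserving π-a.e., then φ(C)(π) ≤ φ(C)(π'). -/
set_option linter.unusedSectionVars false

open MeasureTheory

namespace IC

variable {X : Type*} [Fintype X] [Nonempty X]

/-- The belief simplex Δ(X). -/
abbrev Δ (X : Type*) [Fintype X] : Set (X → ℝ) := stdSimplex ℝ X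

/-- Δ²(X): Borel probability measures on Δ(X). -/
abbrev PM (X : Type*) [Fintype X] := ProbabilityMeasure (Δ X)

/-- Barycenter of π ∈ Δ²(X). -/
noncomputable def bar (π : PM X) : X → ℝ :=
  fun x => ∫ ν, (ν : X → ℝ) x ∂(π : Measure (Δ X))

lemma eval_integrable (π : PM X) (x : X) :
    Integrable (fun ν : Δ X => (ν : X → ℝ) x) (π : Measure (Δ X)) := by
  have hc : Continuous (fun ν : Δ X => (ν : X → ℝ) x) :=
    (continuous_apply x).comp continuous_subtype_val
  refine (integrable_const (1 : ℝ)).mono' hc.aestronglyMeasurable ?_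
  refine Filter.Eventually.of_forall fun ν => ?_
  rw [Real.norm_eq_abs]
  refine (abs_of_nonneg (ν.2.1 x)).trans_le ?_
  calc (ν : X → ℝ) x ≤ ∑ y, (ν : X → ℝ) y :=
        Finset.single_le_sum (fun y _ => ν.2.1 y) (Finset.mem_univ x)
    _ = 1 := ν.2.2

lemma bar_mem (π : PM X) : bar π ∈ Δ X := by
  constructor
  · intro x; exact integral_nonneg fun ν => ν.2.1 x
  · calc ∑ x, bar π x
        = ∫ ν, ∑ x, (ν : X → ℝ) x ∂(π : Measure (Δ X)) :=
          (integral_finset_sum Finset.univ fun x _ => eval_integrable π x).symm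
      _ = ∫ _ν, (1 : ℝ) ∂(π : Measure (Δ X)) :=
          integral_congr_ae (Filter.Eventually.of_forall fun ν => ν.2.2)
      _ = 1 := by simp

/-- Barycenter as a point of the simplex. -/
noncomputable def barPt (π : PM X) : Δ X := ⟨bar π, bar_mem π⟩

/-- Dirac measure as an element of Δ²(X). -/
noncomputable def diracPM (μ : Δ X) : PM X := ⟨Measure.dirac μ, inferInstance⟩

lemma isProbabilityMeasure_bind {α β : Type*} [MeasurableSpace α] [MeasurableSpace β]
    (π : Measure α) [IsProbabilityMeasure π] (k : α → Measure β) (hk : Measurable k)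
    (hkp : ∀ a, IsProbabilityMeasure (k a)) : IsProbabilityMeasure (π.bind k) := by
  constructor
  rw [Measure.bind_apply MeasurableSet.univ hk.aemeasurable]
  have h1 : ∀ a, k a Set.univ = 1 := fun a => (hkp a).measure_univ
  simp [h1]

/-- The Borel σ-algebra on probability measures (generated by evaluations, via the
canonical σ-algebra on measures). -/
instance instMeasurableSpacePM {Ω : Type*} [MeasurableSpace Ω] :
    MeasurableSpace (ProbabilityMeasure Ω) :=
  MeasurableSpace.comap (fun μ => (μ : Measure Ω)) inferInstance

lemma measurable_pmCoe {Ω : Type*} [MeasurableSpace Ω] :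
    Measurable (fun μ : ProbabilityMeasure Ω => (μ : Measure Ω)) :=
  measurable_iff_comap_le.mpr le_rfl

/-- Composition π∘k of an information structure with a (Borel measurable) kernel. -/
noncomputable def comp (π : PM X) (k : Δ X → PM X) (hk : Measurable k) : PM X :=
  ⟨(π : Measure (Δ X)).bind (fun μ => (k μ : Measure (Δ X))),
    isProbabilityMeasure_bind _ _ (measurable_pmCoe.comp hk) (fun μ => (k μ).2)⟩

/-- ∫ π dP(π), for P a probability measure over Δ²(X). -/
noncomputable def joinPM (P : ProbabilityMeasure (PM X)) : PM X :=
  ⟨(P : Measure (PM X)).bind (fun π => (π : Measure (Δ X))),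
    isProbabilityMeasure_bind _ _ measurable_pmCoe (fun π => π.2)⟩

/-- A kernel is mean preserving π-a.e. -/
def MeanPreservingAE (π : PM X) (k : Δ X → PM X) : Prop :=
  ∀ᵐ μ ∂(π : Measure (Δ X)), bar (k μ) = (μ : X → ℝ)

/-- Axiom 1: Blackwell monotonicity. -/
def Axiom1 (C : PM X → ℝ) : Prop :=
  ∀ (π : PM X) (k : Δ X → PM X) (hk : Measurable k),
    MeanPreservingAE π k → C π ≤ C (comp π k hk)

/-- Axiom 2: subadditivity. -/
def Axiom2 (C : PM X → ℝ) : Prop :=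
  ∀ (π : PM X) (k : Δ X → PM X) (hk : Measurable k),
    C (comp π k hk) ≤ C π + ∫ μ, C (k μ) ∂(π : Measure (Δ X))

/-- The class 𝒞 of direct information cost functions. -/
structure ClassC (C : PM X → ℝ) : Prop where
  nonneg : ∀ π, 0 ≤ C π
  bounded : ∃ M : ℝ, ∀ π, C π ≤ M
  measurable : Measurable C
  dirac_zero : ∀ μ : Δ X, C (diracPM μ) = 0
  mixing : ∀ P : ProbabilityMeasure (PM X),
    (∃ μ₀ : X → ℝ, ∀ᵐ π ∂(P : Measure (PM X)), bar π = μ₀) →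
    C (joinPM P) ≤ ∫ π, C π ∂(P : Measure (PM X))
  contOn : ∀ X' : Set X, ContinuousOn C {π : PM X | {x | 0 < bar π x} = X'}

/-- A replication process for π. -/
structure RepProcess (π : PM X) where
  T : ℕ
  seq : ℕ → PM X
  k : ℕ → Δ X → PM X
  r : ℕ → Δ X → PM X
  k_meas : ∀ t, Measurable (k t)
  r_meas : ∀ t, Measurable (r t)
  init : seq 0 = diracPM (barPt π)
  final : seq (2 * T) = π
  k_mp : ∀ t, t < T → MeanPreservingAE (seq (2 * t)) (k t)
  k_comp : ∀ t, (ht : t < T) → seq (2 * t + 1) = comp (seq (2 * t)) (k t) (k_meas t)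
  r_mp : ∀ t, t < T → MeanPreservingAE (seq (2 * t + 2)) (r t)
  r_comp : ∀ t, (ht : t < T) → seq (2 * t + 1) = comp (seq (2 * t + 2)) (r t) (r_meas t)

/-- Total cost of a replication process. -/
noncomputable def totalCost (C : PM X → ℝ) {π : PM X} (R : RepProcess π) : ℝ :=
  ∑ t ∈ Finset.range R.T, ∫ μ, C (R.k t μ) ∂((R.seq (2 * t) : Measure (Δ X)))

/-- The indirect cost φ(C). -/
noncomputable def phi (C : PM X → ℝ) (π : PM X) : ℝ :=
  sInf (Set.range fun R : RepProcess π => totalCost C R)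

/-- Uniformly posterior separable cost. -/
def UPS (C : PM X → ℝ) : Prop :=
  ∃ H : (X → ℝ) → ℝ, ConvexOn ℝ (Δ X) H ∧
    ∀ π : PM X, C π = (∫ ν, H (ν : X → ℝ) ∂(π : Measure (Δ X))) - H (bar π)


lemma measurable_mkPM {α : Type*} [MeasurableSpace α] {g : α → PM X}
    (h : Measurable (fun a => (g a : Measure (Δ X)))) : Measurable g := by
  intro s hs
  obtain ⟨t, ht, rfl⟩ := hs
  exact h ht

lemma diracPM_coe (μ : Δ X) : (diracPM μ : Measure (Δ X)) = Measure.dirac μ := rfl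

lemma comp_coe (π : PM X) (k : Δ X → PM X) (hk : Measurable k) :
    (comp π k hk : Measure (Δ X)) = (π : Measure (Δ X)).bind (fun μ => (k μ : Measure (Δ X))) :=
  rfl

lemma measurable_diracKernel : Measurable (fun μ : Δ X => diracPM μ) :=
  measurable_mkPM Measure.measurable_dirac

lemma bar_dirac (μ : Δ X) : bar (diracPM μ) = (μ : X → ℝ) := by
  funext x
  simp [bar, diracPM_coe, integral_dirac]

lemma comp_diracKernel (π : PM X) :
    comp π (fun μ => diracPM μ) measurable_diracKernel = π := by
  apply Subtype.ext
  exact Measure.bind_dirac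

lemma comp_congr (π : PM X) {k₁ k₂ : Δ X → PM X} (h : k₁ = k₂) {h₁ : Measurable k₁} :
    comp π k₁ h₁ = comp π k₂ (h ▸ h₁) := by subst h; rfl

lemma mpae_diracKernel (π : PM X) : MeanPreservingAE π (fun μ => diracPM μ) :=
  Filter.Eventually.of_forall fun μ => bar_dirac μ

lemma bar_comp (π : PM X) (k : Δ X → PM X) (hk : Measurable k)
    (hmp : MeanPreservingAE π k) : bar (comp π k hk) = bar π := by
  funext x
  have hev : Measurable (fun ν : Δ X => (ν : X → ℝ) x) :=
    ((continuous_apply x).comp continuous_subtype_val).measurable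
  have hme : Measurable (fun ν : Δ X => ENNReal.ofReal ((ν : X → ℝ) x)) :=
    ENNReal.measurable_ofReal.comp hev
  have hkm : Measurable (fun μ : Δ X => (k μ : Measure (Δ X))) := measurable_pmCoe.comp hk
  have h1 : bar (comp π k hk) x
      = (∫⁻ ν, ENNReal.ofReal ((ν : X → ℝ) x) ∂((comp π k hk) : Measure (Δ X))).toReal := by
    exact integral_eq_lintegral_of_nonneg_ae
      (Filter.Eventually.of_forall fun ν => ν.2.1 x) hev.aestronglyMeasurable
  rw [h1, comp_coe, Measure.lintegral_bind hkm.aemeasurable hme.aemeasurable]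
  have h2 : ∀ μ : Δ X, ∫⁻ ν, ENNReal.ofReal ((ν : X → ℝ) x) ∂(k μ : Measure (Δ X))
      = ENNReal.ofReal (bar (k μ) x) := fun μ =>
    (ofReal_integral_eq_lintegral_ofReal (eval_integrable (k μ) x)
      (Filter.Eventually.of_forall fun ν => ν.2.1 x)).symm
  have h3 : (∫⁻ μ, ∫⁻ ν, ENNReal.ofReal ((ν : X → ℝ) x) ∂(k μ : Measure (Δ X))
        ∂(π : Measure (Δ X)))
      = ∫⁻ μ : Δ X, ENNReal.ofReal ((μ : X → ℝ) x) ∂(π : Measure (Δ X)) := by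
    refine lintegral_congr_ae ?_
    filter_upwards [hmp] with μ hμ
    rw [h2 μ, hμ]
  rw [h3, ← ofReal_integral_eq_lintegral_ofReal (eval_integrable π x)
    (Filter.Eventually.of_forall fun ν => ν.2.1 x)]
  exact ENNReal.toReal_ofReal (integral_nonneg fun ν => ν.2.1 x)

lemma barPt_comp (π : PM X) (k : Δ X → PM X) (hk : Measurable k)
    (hmp : MeanPreservingAE π k) : barPt (comp π k hk) = barPt π :=
  Subtype.ext (bar_comp π k hk hmp)

/-- Trivial replication process for any π. -/
noncomputable def trivialRep (π : PM X) : RepProcess π where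
  T := 1
  seq := fun n => if n = 0 then diracPM (barPt π) else π
  k := fun _ _ => π
  r := fun _ μ => diracPM μ
  k_meas := fun _ => measurable_const
  r_meas := fun _ => measurable_diracKernel
  init := by simp
  final := by simp
  k_mp := by
    intro t ht
    interval_cases t
    have h : MeanPreservingAE (diracPM (barPt π)) (fun _ : Δ X => π) := by
      unfold MeanPreservingAE
      rw [diracPM_coe, ae_dirac_eq]
      exact Filter.eventually_pure.mpr rfl
    exact h
  k_comp := by
    intro t ht
    interval_cases t
    simp only [mul_zero, zero_add, if_pos rfl, if_neg (one_ne_zero)]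
    apply Subtype.ext
    exact (Measure.dirac_bind (measurable_pmCoe.comp measurable_const) _).symm
  r_mp := fun t ht => Filter.Eventually.of_forall fun μ => bar_dirac μ
  r_comp := by
    intro t ht
    interval_cases t
    simp only [mul_zero, zero_add, if_neg (one_ne_zero), if_neg (two_ne_zero)]
    exact (comp_diracKernel π).symm

/-- Extend a replication process for comp π k to one for π. -/
noncomputable def extRep (π : PM X) (k : Δ X → PM X) (hk : Measurable k)
    (hmp : MeanPreservingAE π k) (R : RepProcess (comp π k hk)) : RepProcess π where
  T := R.T + 1
  seq := fun n =>
    if n ≤ 2 * R.T then R.seq n else if n = 2 * R.T + 1 then comp π k hk else π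
  k := fun t => if t < R.T then R.k t else (fun μ => diracPM μ)
  r := fun t => if t < R.T then R.r t else k
  k_meas := fun t => by
    by_cases h : t < R.T
    · simpa [h] using R.k_meas t
    · simpa [h] using measurable_diracKernel
  r_meas := fun t => by
    by_cases h : t < R.T
    · simpa [h] using R.r_meas t
    · simpa [h] using hk
  init := by
    simp only [Nat.zero_le, if_pos]
    rw [R.init, barPt_comp π k hk hmp]
  final := by
    have h1 : ¬ (2 * (R.T + 1) ≤ 2 * R.T) := by omega
    have h2 : 2 * (R.T + 1) ≠ 2 * R.T + 1 := by omega
    simp [h1, h2]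
  k_mp := by
    intro t ht
    by_cases h : t < R.T
    · have : 2 * t ≤ 2 * R.T := by omega
      simpa [this, h] using R.k_mp t h
    · have hT : t = R.T := by omega
      subst hT
      simp only [le_refl, if_pos, lt_irrefl, if_neg]
      rw [R.final]
      exact mpae_diracKernel _
  k_comp := by
    intro t ht
    by_cases h : t < R.T
    · have h1 : 2 * t ≤ 2 * R.T := by omega
      have h2 : 2 * t + 1 ≤ 2 * R.T := by omega
      simp only [h1, h2, if_pos]
      rw [comp_congr _ (if_pos h)]
      exact R.k_comp t h
    · have hT : t = R.T := by omega
      subst hT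
      have h1 : ¬ (2 * R.T + 1 ≤ 2 * R.T) := by omega
      simp only [le_refl, if_pos, h1, if_neg, if_pos rfl]
      rw [comp_congr _ (if_neg (lt_irrefl R.T)), R.final]
      exact (comp_diracKernel (comp π k hk)).symm
  r_mp := by
    intro t ht
    by_cases h : t < R.T
    · have : 2 * t + 2 ≤ 2 * R.T := by omega
      simpa [this, h] using R.r_mp t h
    · have hT : t = R.T := by omega
      subst hT
      have h1 : ¬ (2 * R.T + 2 ≤ 2 * R.T) := by omega
      have h2 : 2 * R.T + 2 ≠ 2 * R.T + 1 := by omega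
      simpa [h1, h2] using hmp
  r_comp := by
    intro t ht
    by_cases h : t < R.T
    · have h1 : 2 * t + 1 ≤ 2 * R.T := by omega
      have h2 : 2 * t + 2 ≤ 2 * R.T := by omega
      simp only [h1, h2, if_pos]
      rw [comp_congr _ (if_pos h)]
      exact R.r_comp t h
    · have hT : t = R.T := by omega
      subst hT
      have h1 : ¬ (2 * R.T + 1 ≤ 2 * R.T) := by omega
      have h2 : ¬ (2 * R.T + 2 ≤ 2 * R.T) := by omega
      have h3 : 2 * R.T + 2 ≠ 2 * R.T + 1 := by omega
      beta_reduce
      rw [if_neg h1, if_pos rfl, if_neg h2, if_neg h3,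
        comp_congr _ (if_neg (lt_irrefl R.T))]

lemma totalCost_extRep (C : PM X → ℝ) (hC : ClassC C) (π : PM X) (k : Δ X → PM X)
    (hk : Measurable k) (hmp : MeanPreservingAE π k) (R : RepProcess (comp π k hk)) :
    totalCost C (extRep π k hk hmp R) = totalCost C R := by
  have hkproj : (extRep π k hk hmp R).k
      = fun t => if t < R.T then R.k t else (fun μ => diracPM μ) := rfl
  have hsproj : (extRep π k hk hmp R).seq
      = fun n => if n ≤ 2 * R.T then R.seq n
          else if n = 2 * R.T + 1 then comp π k hk else π := rfl
  have hTproj : (extRep π k hk hmp R).T = R.T + 1 := rfl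
  unfold totalCost
  rw [hTproj, hkproj, hsproj, Finset.sum_range_succ]
  beta_reduce
  have hlast : (∫ μ : Δ X, C ((if R.T < R.T then R.k R.T else fun μ => diracPM μ) μ)
      ∂(((if 2 * R.T ≤ 2 * R.T then R.seq (2 * R.T)
          else if 2 * R.T = 2 * R.T + 1 then comp π k hk else π) : PM X) :
          Measure (Δ X))) = 0 := by
    simp [lt_irrefl, hC.dirac_zero]
  rw [hlast, add_zero]
  refine Finset.sum_congr rfl fun t ht => ?_
  rw [Finset.mem_range] at ht
  have h1 : 2 * t ≤ 2 * R.T := by omega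
  rw [if_pos h1]
  exact integral_congr_ae (Filter.Eventually.of_forall fun μ => by rw [if_pos ht])

lemma totalCost_nonneg (C : PM X → ℝ) (hC : ClassC C) (π : PM X) (R : RepProcess π) :
    0 ≤ totalCost C R :=
  Finset.sum_nonneg fun t _ => integral_nonneg fun μ => hC.nonneg _

/-- for C ∈ 𝒞 the indirect cost φ(C) is Blackwell monotone. -/
theorem phi_blackwell_mono (C : PM X → ℝ) (hC : ClassC C)
    (π : PM X) (k : Δ X → PM X) (hk : Measurable k) (hmp : MeanPreservingAE π k) :
    phi C π ≤ phi C (comp π k hk) := by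
  have hbdd : BddBelow (Set.range fun R : RepProcess π => totalCost C R) :=
    ⟨0, by rintro b ⟨R, rfl⟩; exact totalCost_nonneg C hC π R⟩
  refine le_csInf ⟨totalCost C (trivialRep (comp π k hk)), ⟨trivialRep _, rfl⟩⟩ ?_
  rintro b ⟨R, rfl⟩
  calc phi C π ≤ totalCost C (extRep π k hk hmp R) :=
        csInf_le hbdd ⟨extRep π k hk hmp R, rfl⟩
    _ = totalCost C R := totalCost_extRep C hC π k hk hmp R


end IC
end

section
/- Let X be a nonempty finite set. Define the negentropy H_E : Δ(X) → ℝ by H_E(μ) = ∑_x μ(x)·log μ(x) (with 0·log 0 := 0), and the mutual-information cost C_MI(π) = ∫ H_E dπ − H_E(bar(π)) for π ∈ Δ²(X). Then C_MI is locally characterized by half the Fisher information matrix: for every μ₀ ∈ Δ(X)° and every ε > 0 there exists δ > 0 such that every π ∈ Δ²(X) supported in the open δ-ball around μ₀, with μ = bar(π), satisfies |C_MI(π) − (1/2)·∫ ∑_x (ν(x)−μ(x))²/μ(x) dπ(ν)| ≤ ε·∫ ‖ν−μ‖² dπ(ν). -/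
set_option linter.unusedSectionVars false

open MeasureTheory

namespace IC

variable {X : Type*} [Fintype X] [Nonempty X]

/-- The relative interior Δ(X)° of the simplex. -/
def interiorSimplex (X : Type*) [Fintype X] : Set (X → ℝ) :=
  {μ | (∀ x, 0 < μ x) ∧ ∑ x, μ x = 1}

/-- Squared Euclidean norm on ℝ^X. -/
def sqnorm (y : X → ℝ) : ℝ := ∑ x, (y x) ^ 2

/-- Quadratic form yᵀ B y. -/
def quadForm (B : Matrix X X ℝ) (y : X → ℝ) : ℝ := ∑ x, ∑ x', y x * B x x' * y x'

/-- Open Euclidean ball in ℝ^X. -/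
def ball2 (μ₀ : X → ℝ) (δ : ℝ) : Set (X → ℝ) := {ν | Real.sqrt (sqnorm (ν - μ₀)) < δ}

/-- π is supported in the set s. -/
def SuppIn (π : PM X) (s : Set (X → ℝ)) : Prop :=
  ∀ᵐ (ν : Δ X) ∂(π : Measure (Δ X)), (ν : X → ℝ) ∈ s

/-- C is locally characterized by the matrix field B (Assumption `ass:diff`). -/
def LocChar (C : PM X → ℝ) (B : (X → ℝ) → Matrix X X ℝ) : Prop :=
  ∀ μ₀ ∈ interiorSimplex X, ∀ ε > 0, ∃ δ > 0, ∀ π : PM X, SuppIn π (ball2 μ₀ δ) →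
    |C π - ∫ ν, quadForm (B (bar π)) ((ν : X → ℝ) - bar π) ∂(π : Measure (Δ X))| ≤
      ε * ∫ ν, sqnorm ((ν : X → ℝ) - bar π) ∂(π : Measure (Δ X))

/-- B is a continuous, symmetric, positive semi-definite* matrix field on Δ(X)°. -/
def GoodB (B : (X → ℝ) → Matrix X X ℝ) : Prop :=
  ContinuousOn B (interiorSimplex X) ∧
  (∀ μ ∈ interiorSimplex X, (B μ).IsSymm) ∧
  (∀ μ ∈ interiorSimplex X, ∀ y : X → ℝ, ∑ x, y x = 0 → 0 ≤ quadForm (B μ) y)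

/-- Assumption 2: C is bounded below by a multiple of the posterior variance. -/
def Assumption2 (C : PM X → ℝ) : Prop :=
  ∃ m : ℝ, 0 < m ∧ ∀ π : PM X,
    m * ∫ ν, sqnorm ((ν : X → ℝ) - bar π) ∂(π : Measure (Δ X)) ≤ C π

/-- Bregman (uniformly posterior separable) cost ∫H dπ − H(bar π) for a potential H. -/
noncomputable def bregman (H : (X → ℝ) → ℝ) (π : PM X) : ℝ :=
  (∫ ν, H (ν : X → ℝ) ∂(π : Measure (Δ X))) - H (bar π)

/-- Negentropy ∑ μ(x) log μ(x) (with 0·log 0 = 0, which holds as Real.log 0 = 0). -/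
noncomputable def negEnt (μ : X → ℝ) : ℝ := ∑ x, μ x * Real.log (μ x)


lemma key1 (a h : ℝ) (ha : 0 < a) (hh : |h| ≤ a / 2) :
    |(a + h) * Real.log (a + h) - a * Real.log a - (Real.log a + 1) * h - h ^ 2 / (2 * a)|
      ≤ 4 * |h| ^ 3 / a ^ 2 := by
  set u := h / a with hu
  have hh' : h = a * u := by rw [hu]; field_simp
  have hau : |u| ≤ 1 / 2 := by
    rw [hu, abs_div, abs_of_pos ha]
    rw [div_le_div_iff₀ ha (by norm_num : (0:ℝ) < 2)]
    linarith
  obtain ⟨hu1, hu2⟩ := abs_le.mp hau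
  have h1u : (0:ℝ) < 1 + u := by linarith
  have hb : a + h = a * (1 + u) := by rw [hh']; ring
  have hlog : Real.log (a + h) = Real.log a + Real.log (1 + u) := by
    rw [hb, Real.log_mul ha.ne' h1u.ne']
  set L := Real.log (1 + u) with hL
  have hW := Real.abs_log_sub_add_sum_range_le (x := -u) (by rw [abs_neg]; linarith [hau]) 2
  simp only [Finset.sum_range_succ, Finset.sum_range_zero, abs_neg, sub_neg_eq_add] at hW
  norm_num at hW
  have hWb : |-u + u ^ 2 / 2 + L| ≤ 2 * |u| ^ 3 := by
    refine hW.trans ?_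
    rw [div_le_iff₀ (by linarith : (0:ℝ) < 1 - |u|)]
    nlinarith [pow_nonneg (abs_nonneg u) 3]
  obtain ⟨hW1, hW2⟩ := abs_le.mp hWb
  have hE : (a + h) * Real.log (a + h) - a * Real.log a - (Real.log a + 1) * h - h ^ 2 / (2 * a)
      = a * ((1 + u) * (-u + u ^ 2 / 2 + L) - u ^ 3 / 2) := by
    rw [hlog, hh']; field_simp; ring
  rw [hE]
  have habs : |h| = a * |u| := by rw [hh', abs_mul, abs_of_pos ha]
  rw [habs, abs_mul, abs_of_pos ha]
  have hgoal : 4 * (a * |u|) ^ 3 / a ^ 2 = a * (4 * |u| ^ 3) := by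
    field_simp
  rw [hgoal]
  refine mul_le_mul_of_nonneg_left ?_ ha.le
  rw [abs_le]
  have hcube : u ^ 3 ≤ |u| ^ 3 ∧ -(|u| ^ 3) ≤ u ^ 3 := by
    constructor <;> · rw [← abs_pow] ; first | exact le_abs_self _ | exact neg_abs_le _
  constructor <;> nlinarith [pow_nonneg (abs_nonneg u) 3, hcube.1, hcube.2,
    mul_le_mul_of_nonneg_left hW2 h1u.le, mul_le_mul_of_nonneg_left hW1 h1u.le]

lemma key2 (ε m δ a b : ℝ) (hε : 0 < ε) (hm : 0 < m) (hδε : δ ≤ ε * m ^ 2 / 32)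
    (hδ0 : 0 ≤ δ) (ha : m / 2 ≤ a) (hh2 : |b - a| ≤ 2 * δ) (hha : |b - a| ≤ a / 2) :
    |b * Real.log b - a * Real.log a - (Real.log a + 1) * (b - a) - (b - a) ^ 2 / (2 * a)|
      ≤ ε * (b - a) ^ 2 := by
  have ha0 : 0 < a := lt_of_lt_of_le (by positivity) ha
  have hk := key1 a (b - a) ha0 hha
  have hab : a + (b - a) = b := by ring
  rw [hab] at hk
  refine hk.trans ?_
  rw [div_le_iff₀ (pow_pos ha0 2)]
  set h := b - a with hh
  clear_value h
  have hsq : |h| ^ 2 = h ^ 2 := sq_abs h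
  have hmu2 : m ^ 2 / 4 ≤ a ^ 2 := by nlinarith
  have t1 : |h| ^ 3 ≤ 2 * δ * h ^ 2 := by
    have ht := mul_le_mul_of_nonneg_right hh2 (sq_nonneg |h|)
    calc |h| ^ 3 = |h| * |h| ^ 2 := by ring
      _ ≤ 2 * δ * |h| ^ 2 := ht
      _ = 2 * δ * h ^ 2 := by rw [hsq]
  have t2 : 32 * δ * h ^ 2 ≤ ε * m ^ 2 * h ^ 2 :=
    mul_le_mul_of_nonneg_right (by linarith) (sq_nonneg h)
  have t3 : ε * m ^ 2 * h ^ 2 ≤ 4 * (ε * h ^ 2 * a ^ 2) := by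
    nlinarith [mul_le_mul_of_nonneg_left hmu2 (mul_nonneg hε.le (sq_nonneg h))]
  linarith [mul_nonneg hδ0 (sq_nonneg h)]

lemma cont_integrable (π : PM X) {f : Δ X → ℝ} (hf : Continuous f) :
    Integrable f (π : Measure (Δ X)) := by
  have : CompactSpace (Δ X) := isCompact_iff_compactSpace.mp (isCompact_stdSimplex ℝ X)
  exact hf.integrable_of_hasCompactSupport (isClosed_tsupport _).isCompact

lemma coord_abs_le_sqrt (y : X → ℝ) (x : X) : |y x| ≤ Real.sqrt (sqnorm y) := by
  rw [← Real.sqrt_sq_eq_abs]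
  exact Real.sqrt_le_sqrt (Finset.single_le_sum (fun i _ => sq_nonneg (y i)) (Finset.mem_univ x))

lemma continuous_eval (x : X) : Continuous fun ν : Δ X => (ν : X → ℝ) x :=
  (continuous_apply x).comp continuous_subtype_val

/-- the mutual-information cost is locally characterized by half the
Fisher information matrix. -/
theorem mutualInformation_locChar :
    ∀ μ₀ ∈ interiorSimplex X, ∀ ε > 0, ∃ δ > 0, ∀ π : PM X, SuppIn π (ball2 μ₀ δ) →
      |bregman negEnt π -
          (1 / 2) * ∫ ν, ∑ x, ((ν : X → ℝ) x - bar π x) ^ 2 / bar π x ∂(π : Measure (Δ X))| ≤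
        ε * ∫ ν, sqnorm ((ν : X → ℝ) - bar π) ∂(π : Measure (Δ X)) := by
  intro μ₀ hμ₀ ε hε
  obtain ⟨hμ₀pos, hμ₀sum⟩ := hμ₀
  have hne : (Finset.univ : Finset X).Nonempty := Finset.univ_nonempty
  set m := Finset.univ.inf' hne μ₀ with hm
  have hmpos : 0 < m := (Finset.lt_inf'_iff hne).mpr fun x _ => hμ₀pos x
  have hmle : ∀ x, m ≤ μ₀ x := fun x => Finset.inf'_le _ (Finset.mem_univ x)
  refine ⟨min (m/8) (ε * m^2/32), lt_min (by positivity) (by positivity), fun π hsupp => ?_⟩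
  set δ := min (m/8) (ε * m^2/32) with hδdef
  have hδpos : 0 < δ := lt_min (by positivity) (by positivity)
  have hδm : δ ≤ m/8 := min_le_left _ _
  have hδε : δ ≤ ε * m^2/32 := min_le_right _ _
  set μ := bar π with hμdef
  -- a.e. coordinate bound relative to μ₀
  have hae : ∀ᵐ (ν : Δ X) ∂(π : Measure (Δ X)), ∀ x, |(ν : X → ℝ) x - μ₀ x| ≤ δ := by
    filter_upwards [hsupp] with ν hν x
    have h1 : |((ν : X → ℝ) - μ₀) x| ≤ Real.sqrt (sqnorm ((ν : X → ℝ) - μ₀)) :=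
      coord_abs_le_sqrt _ x
    have h2 : Real.sqrt (sqnorm ((ν : X → ℝ) - μ₀)) < δ := hν
    simpa [Pi.sub_apply] using h1.trans h2.le
  -- barycenter coordinate bound
  have hbar : ∀ x, |μ x - μ₀ x| ≤ δ := by
    intro x
    have hint : μ x - μ₀ x = ∫ ν, ((ν : X → ℝ) x - μ₀ x) ∂(π : Measure (Δ X)) := by
      rw [integral_sub (eval_integrable π x) (integrable_const _), integral_const]
      simp [hμdef, bar]
    rw [hint, ← Real.norm_eq_abs]
    calc ‖∫ ν, ((ν : X → ℝ) x - μ₀ x) ∂(π : Measure (Δ X))‖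
        ≤ δ * ((π : Measure (Δ X)) (Set.univ : Set (Δ X))).toReal := by
          refine norm_integral_le_of_norm_le_const ?_
          filter_upwards [hae] with ν hν
          simpa [Real.norm_eq_abs] using hν x
      _ = δ := by simp
  have hμlb : ∀ x, m/2 ≤ μ x := by
    intro x
    have h1 := (abs_le.mp (hbar x)).1
    have := hmle x
    linarith
  have hμpos : ∀ x, 0 < μ x := fun x => lt_of_lt_of_le (by positivity) (hμlb x)
  -- integrands
  have hint_negEnt : Integrable (fun ν : Δ X => negEnt (ν : X → ℝ)) (π : Measure (Δ X)) := by
    refine cont_integrable π ?_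
    unfold negEnt
    exact continuous_finset_sum _ fun x _ => Real.continuous_mul_log.comp (continuous_eval x)
  have hterm : ∀ x : X, Integrable
      (fun ν : Δ X => (Real.log (μ x) + 1) * ((ν : X → ℝ) x - μ x)) (π : Measure (Δ X)) := by
    intro x
    exact ((eval_integrable π x).sub (integrable_const _)).const_mul _
  have hint_lin : Integrable
      (fun ν : Δ X => ∑ x, (Real.log (μ x) + 1) * ((ν : X → ℝ) x - μ x))
      (π : Measure (Δ X)) := by
    exact integrable_finset_sum _ fun x _ => hterm x
  have hint_q : Integrable (fun ν : Δ X => ∑ x, ((ν : X → ℝ) x - μ x) ^ 2 / μ x)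
      (π : Measure (Δ X)) := by
    refine cont_integrable π ?_
    exact continuous_finset_sum _ fun x _ =>
      (((continuous_eval x).sub continuous_const).pow 2).div_const _
  have hint_sq : Integrable (fun ν : Δ X => sqnorm ((ν : X → ℝ) - μ)) (π : Measure (Δ X)) := by
    refine cont_integrable π ?_
    unfold sqnorm
    exact continuous_finset_sum _ fun x _ =>
      (((continuous_eval x).sub continuous_const).pow 2)
  set g : Δ X → ℝ := fun ν => negEnt (ν : X → ℝ) - negEnt μ
      - (∑ x, (Real.log (μ x) + 1) * ((ν : X → ℝ) x - μ x))
      - (1/2) * ∑ x, ((ν : X → ℝ) x - μ x) ^ 2 / μ x with hg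
  have hint_A : Integrable (fun ν : Δ X => negEnt (ν : X → ℝ) - negEnt μ)
      (π : Measure (Δ X)) := by exact hint_negEnt.sub (integrable_const _)
  have hint_B : Integrable (fun ν : Δ X => negEnt (ν : X → ℝ) - negEnt μ
      - ∑ x, (Real.log (μ x) + 1) * ((ν : X → ℝ) x - μ x)) (π : Measure (Δ X)) := by
    exact hint_A.sub hint_lin
  have hint_q2 : Integrable (fun ν : Δ X => (1/2 : ℝ) * ∑ x, ((ν : X → ℝ) x - μ x) ^ 2 / μ x)
      (π : Measure (Δ X)) := by exact hint_q.const_mul _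
  have hint_g : Integrable g (π : Measure (Δ X)) := by exact hint_B.sub hint_q2
  -- linear term integrates to zero
  have hlin0 : ∫ ν, (∑ x, (Real.log (μ x) + 1) * ((ν : X → ℝ) x - μ x))
      ∂(π : Measure (Δ X)) = 0 := by
    rw [integral_finset_sum _ (fun x _ => hterm x)]
    refine Finset.sum_eq_zero fun x _ => ?_
    rw [integral_const_mul, integral_sub (eval_integrable π x) (integrable_const _),
      integral_const]
    simp [hμdef, bar]
  -- the key identity
  have hkey : ∫ ν, g ν ∂(π : Measure (Δ X))
      = bregman negEnt π
        - (1/2) * ∫ ν, ∑ x, ((ν : X → ℝ) x - μ x) ^ 2 / μ x ∂(π : Measure (Δ X)) := by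
    simp only [hg]
    rw [integral_sub hint_B hint_q2,
      integral_sub hint_A hint_lin,
      integral_sub hint_negEnt (integrable_const _), integral_const, hlin0,
      integral_const_mul]
    simp [bregman, hμdef]
  -- pointwise a.e. bound
  have hptwise : ∀ᵐ (ν : Δ X) ∂(π : Measure (Δ X)), |g ν| ≤ ε * sqnorm ((ν : X → ℝ) - μ) := by
    filter_upwards [hae] with ν hν
    have hcoord : ∀ x, |(ν : X → ℝ) x - μ x| ≤ 2 * δ := by
      intro x
      calc |(ν : X → ℝ) x - μ x|
          ≤ |(ν : X → ℝ) x - μ₀ x| + |μ₀ x - μ x| := abs_sub_le _ _ _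
        _ ≤ δ + δ := add_le_add (hν x) (by rw [abs_sub_comm]; exact hbar x)
        _ = 2 * δ := by ring
    have gform : g ν = ∑ x, ((ν : X → ℝ) x * Real.log ((ν : X → ℝ) x)
        - μ x * Real.log (μ x) - (Real.log (μ x) + 1) * ((ν : X → ℝ) x - μ x)
        - ((ν : X → ℝ) x - μ x) ^ 2 / (2 * μ x)) := by
      simp only [hg, negEnt, Finset.mul_sum, ← Finset.sum_sub_distrib]
      refine Finset.sum_congr rfl fun x _ => ?_
      have : μ x ≠ 0 := (hμpos x).ne'
      field_simp
    rw [gform]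
    calc |∑ x, ((ν : X → ℝ) x * Real.log ((ν : X → ℝ) x)
        - μ x * Real.log (μ x) - (Real.log (μ x) + 1) * ((ν : X → ℝ) x - μ x)
        - ((ν : X → ℝ) x - μ x) ^ 2 / (2 * μ x))|
        ≤ ∑ x, |(ν : X → ℝ) x * Real.log ((ν : X → ℝ) x)
          - μ x * Real.log (μ x) - (Real.log (μ x) + 1) * ((ν : X → ℝ) x - μ x)
          - ((ν : X → ℝ) x - μ x) ^ 2 / (2 * μ x)| := Finset.abs_sum_le_sum_abs _ _
      _ ≤ ∑ x, ε * ((ν : X → ℝ) x - μ x) ^ 2 := by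
          refine Finset.sum_le_sum fun x _ => ?_
          have hha : |(ν : X → ℝ) x - μ x| ≤ μ x / 2 := by
            have h1 := hcoord x
            have h2 : m / 2 ≤ μ x := hμlb x
            linarith [hδm]
          exact key2 ε m δ (μ x) ((ν : X → ℝ) x) hε hmpos hδε hδpos.le (hμlb x)
            (hcoord x) hha
      _ = ε * sqnorm ((ν : X → ℝ) - μ) := by
          rw [sqnorm, Finset.mul_sum]
          exact Finset.sum_congr rfl fun x _ => by rw [Pi.sub_apply]
  -- conclude
  calc |bregman negEnt π
      - 1 / 2 * ∫ ν, ∑ x, ((ν : X → ℝ) x - μ x) ^ 2 / μ x ∂(π : Measure (Δ X))|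
      = |∫ ν, g ν ∂(π : Measure (Δ X))| := by rw [hkey]
    _ ≤ ∫ ν, |g ν| ∂(π : Measure (Δ X)) := by
        simpa [Real.norm_eq_abs] using norm_integral_le_integral_norm (μ := (π : Measure (Δ X))) g
    _ ≤ ∫ ν, ε * sqnorm ((ν : X → ℝ) - μ) ∂(π : Measure (Δ X)) :=
        integral_mono_ae hint_g.abs (hint_sq.const_mul ε) hptwise
    _ = ε * ∫ ν, sqnorm ((ν : X → ℝ) - μ) ∂(π : Measure (Δ X)) := integral_const_mul _ _


end IC
end
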